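/- For a monotone operator F on subsets of A and any H, X ⊆ A: if X ⊆ F(H ∪ G_F(H)) then X ⊆ G_F(H) (the Step rule of parameterized coinduction). -/
import Mathlib


def nuSet {A : Type*} (F : Set A → Set A) : Set A := ⋃₀ {R | R ⊆ F R}

def Gfp {A : Type*} (F : Set A → Set A) (H : Set A) : Set A :=
  nuSet (fun X => F (X ∪ H))

theorem step_rule {A : Type*} (F : Set A → Set A) (_hF : Monotone F)
    (H X : Set A) (h : X ⊆ F (H ∪ Gfp F H)) : X ⊆ Gfp F H := by
  set G := Gfp F H with hG
  have hGpost : G ⊆ F (G ∪ H) := by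
    intro a ha
    obtain ⟨R, hR, haR⟩ := ha
    exact _hF (Set.union_subset_union_left H (fun x hx => Set.mem_sUnion.mpr ⟨R, hR, hx⟩)) (hR haR)
  have key : X ∪ G ⊆ F ((X ∪ G) ∪ H) := by
    have mono : F (G ∪ H) ⊆ F ((X ∪ G) ∪ H) :=
      _hF (Set.union_subset_union_left H Set.subset_union_right)
    refine Set.union_subset ?_ (fun a ha => mono (hGpost ha))
    intro a ha
    have : X ⊆ F (G ∪ H) := by rwa [Set.union_comm] at h
    exact mono (this ha)
  intro a ha
  exact Set.mem_sUnion.mpr ⟨X ∪ G, key, Or.inl ha⟩
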